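/- arXiv:1611.00267 — 3 statements merged into one kernel-verified Lean document; each statement's English description precedes it below -/
import Mathlib

section
/- Let n ≥ 1 and let P ∈ ℂ[z] be a polynomial of degree n all of whose roots lie in the open unit disk, whose leading coefficient is a positive real number, and which satisfies (1/(2π)) ∫_{−π}^{π} |P(e^{iθ})|^{−2} dθ = 1. Then P is an n-th orthonormal polynomial with respect to the weight w(θ) := (2π |P(e^{iθ})|²)^{−1}; that is, ∫_{−π}^{π} P(e^{iθ}) e^{−ijθ} w(θ) dθ = 0 for every integer j with 0 ≤ j ≤ n−1, and ∫_{−π}^{π} |P(e^{iθ})|² w(θ) dθ = 1. -/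
open MeasureTheory

/-- `φ` is an `n`-th orthonormal polynomial with respect to the weight `w`: it has degree `n`,
positive real leading coefficient, `∫_{-π}^{π} φ(e^{iθ}) e^{-ijθ} w(θ) dθ = 0` for `0 ≤ j ≤ n-1`,
and `∫_{-π}^{π} |φ(e^{iθ})|² w(θ) dθ = 1`. -/
def IsOrthonormalOPUC (w : ℝ → ℝ) (n : ℕ) (φ : Polynomial ℂ) : Prop :=
  φ.natDegree = n ∧ 0 < φ.leadingCoeff.re ∧ φ.leadingCoeff.im = 0 ∧
    (∀ j : ℕ, j < n →
      (∫ θ in (-Real.pi)..Real.pi,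
        φ.eval (Complex.exp (Complex.I * θ)) * Complex.exp (-Complex.I * j * θ) * (w θ : ℂ)) = 0) ∧
    (∫ θ in (-Real.pi)..Real.pi, ‖φ.eval (Complex.exp (Complex.I * θ))‖ ^ 2 * w θ) = 1

/-- If `P` has degree `n ≥ 1`, all its roots in the open unit disk, positive real leading
coefficient, and `(1/(2π)) ∫_{-π}^{π} |P(e^{iθ})|^{-2} dθ = 1`, then `P` is an `n`-th
orthonormal polynomial with respect to the weight `w(θ) = (2π |P(e^{iθ})|²)⁻¹`. -/
theorem bernstein_szego_orthonormal (n : ℕ) (hn : 1 ≤ n) (P : Polynomial ℂ)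
    (hdeg : P.natDegree = n)
    (hroots : ∀ z ∈ P.roots, ‖z‖ < 1)
    (hlead : 0 < P.leadingCoeff.re ∧ P.leadingCoeff.im = 0)
    (hnorm : (1 / (2 * Real.pi)) *
        ∫ θ in (-Real.pi)..Real.pi, (‖P.eval (Complex.exp (Complex.I * θ))‖ ^ 2)⁻¹ = 1) :
    IsOrthonormalOPUC
      (fun θ : ℝ => (2 * Real.pi * ‖P.eval (Complex.exp (Complex.I * θ))‖ ^ 2)⁻¹) n P := by
  obtain ⟨hre, him⟩ := hlead
  have hc : P.leadingCoeff ≠ 0 := fun h => by simp [h] at hre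
  have hP : P ≠ 0 := fun h => by simp [h] at hc
  have hz1 : ∀ θ : ℝ, ‖Complex.exp (Complex.I * θ)‖ = 1 := fun θ => by
    rw [mul_comm]; exact Complex.norm_exp_ofReal_mul_I θ
  have hPne : ∀ θ : ℝ, P.eval (Complex.exp (Complex.I * θ)) ≠ 0 := by
    intro θ h
    have hm : Complex.exp (Complex.I * θ) ∈ P.roots := by
      rw [Polynomial.mem_roots hP]; exact h
    have := hroots _ hm
    rw [hz1 θ] at this; exact lt_irrefl 1 this
  set g : Polynomial ℂ := P.map (starRingEnd ℂ) with hg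
  set Q : Polynomial ℂ := g.reverse with hQdef
  have hgdeg : g.natDegree = n := by
    rw [hg, Polynomial.natDegree_map_eq_of_injective (starRingEnd ℂ).injective, hdeg]
  have hkey : ∀ z : ℂ, z ≠ 0 → Q.eval z⁻¹ * z ^ n = g.eval z := by
    intro z hz
    haveI := invertibleOfNonzero hz
    have h := Polynomial.eval₂_reverse_mul_pow (RingHom.id ℂ) z g
    rw [invOf_eq_inv] at h
    rw [hgdeg] at h
    exact h
  have hconj : ∀ z : ℂ, g.eval ((starRingEnd ℂ) z) = (starRingEnd ℂ) (P.eval z) := by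
    intro z
    rw [hg, Polynomial.eval_map, Polynomial.eval₂_hom]
  have hQ : ∀ w : ℂ, ‖w‖ ≤ 1 → Q.eval w ≠ 0 := by
    intro w hw h0
    rcases eq_or_ne w 0 with rfl | hw0
    · rw [← Polynomial.coeff_zero_eq_eval_zero, Polynomial.coeff_zero_reverse] at h0
      have : g.leadingCoeff = (starRingEnd ℂ) P.leadingCoeff := by
        rw [hg, Polynomial.leadingCoeff_map_of_injective (starRingEnd ℂ).injective]
      rw [this] at h0
      exact hc ((starRingEnd ℂ).injective (by simpa using h0))
    · have hz := hkey w⁻¹ (inv_ne_zero hw0)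
      rw [inv_inv] at hz
      have hg0 : g.eval w⁻¹ = 0 := by rw [← hz, h0, zero_mul]
      have hroot : P.eval ((starRingEnd ℂ) w⁻¹) = 0 := by
        have h2 := hconj ((starRingEnd ℂ) w⁻¹)
        rw [Complex.conj_conj] at h2
        have := h2.symm.trans hg0
        exact (starRingEnd ℂ).injective (by simpa using this)
      have hmem : (starRingEnd ℂ) w⁻¹ ∈ P.roots := by
        rw [Polynomial.mem_roots hP]; exact hroot
      have hlt := hroots _ hmem
      rw [RCLike.norm_conj, norm_inv] at hlt
      have hpos : 0 < ‖w‖ := norm_pos_iff.mpr hw0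
      have : (1:ℝ) ≤ ‖w‖⁻¹ := one_le_inv_iff₀.mpr ⟨hpos, hw⟩
      linarith
  have hcm : ∀ θ : ℝ, circleMap 0 1 θ = Complex.exp (Complex.I * θ) := fun θ => by
    simp [circleMap, mul_comm]
  refine ⟨hdeg, hre, him, ?_, ?_⟩
  · intro j hj
    set k : ℕ := n - 1 - j with hk
    have hkn : k + 1 + j = n := by omega
    have hpt : ∀ θ : ℝ,
        P.eval (Complex.exp (Complex.I * θ)) * Complex.exp (-Complex.I * j * θ) *
          (((2 * Real.pi * ‖P.eval (Complex.exp (Complex.I * θ))‖ ^ 2)⁻¹ : ℝ) : ℂ)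
        = (2 * Real.pi : ℂ)⁻¹ *
            (Complex.exp (Complex.I * θ) ^ (k+1) * (Q.eval (Complex.exp (Complex.I * θ)))⁻¹) := by
      intro θ
      set z := Complex.exp (Complex.I * θ) with hzdef
      have hz0 : z ≠ 0 := Complex.exp_ne_zero _
      have hp0 : P.eval z ≠ 0 := hPne θ
      have hq0 : Q.eval z ≠ 0 := hQ z (le_of_eq (hz1 θ))
      have hzn : (z : ℂ) ^ n ≠ 0 := pow_ne_zero _ hz0
      have hzu : z * (starRingEnd ℂ) z = 1 := by
        rw [Complex.mul_conj]
        norm_cast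
        rw [Complex.normSq_eq_norm_sq, hz1 θ]; norm_num
      have hzinv : (starRingEnd ℂ) z = z⁻¹ := eq_inv_of_mul_eq_one_left
        (by rw [mul_comm]; exact hzu)
      have hconjP : (starRingEnd ℂ) (P.eval z) = Q.eval z * (z ^ n)⁻¹ := by
        have h1 := hkey z⁻¹ (inv_ne_zero hz0)
        rw [inv_inv] at h1
        have h2 := hconj z
        rw [hzinv] at h2
        rw [← h2, ← h1, inv_pow]
      have hE : Complex.exp (-Complex.I * j * θ) * z ^ (j:ℕ) = 1 := by
        rw [hzdef, ← Complex.exp_nat_mul, ← Complex.exp_add,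
          show (-Complex.I * j * θ : ℂ) + j * (Complex.I * θ) = 0 by ring, Complex.exp_zero]
      have hcast : (((2 * Real.pi * ‖P.eval z‖ ^ 2)⁻¹ : ℝ) : ℂ)
          = ((2 * Real.pi : ℂ) * (P.eval z * (starRingEnd ℂ) (P.eval z)))⁻¹ := by
        rw [Complex.mul_conj]
        push_cast [Complex.normSq_eq_norm_sq]
        norm_num
      rw [hcast, hconjP]
      have h2pi : (2 * Real.pi : ℂ) ≠ 0 := by
        simp [Real.pi_ne_zero, Complex.ext_iff, Real.pi_pos.ne']
      field_simp
      rw [show z ^ n = z ^ (k+1) * z ^ j by rw [← pow_add, hkn]]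
      rw [neg_mul, neg_mul] at hE
      linear_combination z ^ (k+1) * hE
    rw [intervalIntegral.integral_congr (fun θ _ => hpt θ),
      intervalIntegral.integral_const_mul]
    have hper : Function.Periodic
        (fun θ : ℝ => Complex.exp (Complex.I * θ) ^ (k+1) *
          (Q.eval (Complex.exp (Complex.I * θ)))⁻¹) (2 * Real.pi) := by
      intro θ
      have h1 : Complex.exp (Complex.I * ((θ : ℝ) + 2 * Real.pi : ℝ))
          = Complex.exp (Complex.I * θ) := by
        rw [← hcm, ← hcm, periodic_circleMap]
      simp only [h1]
    have hshift : (∫ θ in (-Real.pi)..Real.pi,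
          Complex.exp (Complex.I * θ) ^ (k+1) * (Q.eval (Complex.exp (Complex.I * θ)))⁻¹)
        = ∫ θ in (0:ℝ)..(2*Real.pi),
          Complex.exp (Complex.I * θ) ^ (k+1) * (Q.eval (Complex.exp (Complex.I * θ)))⁻¹ := by
      have h1 := hper.intervalIntegral_add_eq (-Real.pi) 0
      rw [show -Real.pi + 2 * Real.pi = Real.pi by ring, zero_add] at h1
      exact h1
    have hQ' : ∀ w ∈ Metric.closedBall (0:ℂ) 1, Q.eval w ≠ 0 := fun w hw =>
      hQ w (by rwa [Metric.mem_closedBall, Complex.dist_eq, sub_zero] at hw)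
    have hC : (∮ z in C((0:ℂ), 1), z ^ k * (Q.eval z)⁻¹) = 0 := by
      refine Complex.circleIntegral_eq_zero_of_differentiable_on_off_countable zero_le_one
        Set.countable_empty ?_ ?_
      · exact (continuous_pow k).continuousOn.mul
          ((Q.continuous).continuousOn.inv₀ hQ')
      · rintro z ⟨hz, -⟩
        exact (differentiableAt_pow k).mul
          ((Q.differentiableAt).inv (hQ' z (Metric.ball_subset_closedBall hz)))
    have hC2 : (∮ z in C((0:ℂ), 1), z ^ k * (Q.eval z)⁻¹)
        = Complex.I * ∫ θ in (0:ℝ)..(2*Real.pi),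
            Complex.exp (Complex.I * θ) ^ (k+1) * (Q.eval (Complex.exp (Complex.I * θ)))⁻¹ := by
      rw [circleIntegral, ← intervalIntegral.integral_const_mul]
      refine intervalIntegral.integral_congr fun θ _ => ?_
      rw [deriv_circleMap, hcm, smul_eq_mul]
      ring
    rw [hshift]
    have : Complex.I * ∫ θ in (0:ℝ)..(2*Real.pi),
        Complex.exp (Complex.I * θ) ^ (k+1) * (Q.eval (Complex.exp (Complex.I * θ)))⁻¹ = 0 := by
      rw [← hC2, hC]
    rcases mul_eq_zero.mp this with h | h
    · exact absurd h Complex.I_ne_zero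
    · rw [h, mul_zero]
  · have hpt : ∀ θ : ℝ, ‖P.eval (Complex.exp (Complex.I * θ))‖ ^ 2 *
        (2 * Real.pi * ‖P.eval (Complex.exp (Complex.I * θ))‖ ^ 2)⁻¹ = (2 * Real.pi)⁻¹ := by
      intro θ
      have : ‖P.eval (Complex.exp (Complex.I * θ))‖ ^ 2 ≠ 0 :=
        pow_ne_zero _ (norm_ne_zero_iff.mpr (hPne θ))
      rw [mul_inv, mul_comm (2 * Real.pi)⁻¹, ← mul_assoc, mul_inv_cancel₀ this, one_mul]
    rw [intervalIntegral.integral_congr (fun θ _ => hpt θ),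
      intervalIntegral.integral_const, smul_eq_mul]
    field_simp
    ring
end

section
/- Fix ε ∈ (0,1) and δ ∈ (0,π). Then h_n(θ) converges to 2(1 − e^{iθ})^ε uniformly on the set {θ : δ ≤ |θ| ≤ π}, and 2/h_n(θ) converges to (1 − e^{iθ})^{−ε} uniformly on the same set; that is, for every η > 0 there exists N such that for all n ≥ N and all θ with δ ≤ |θ| ≤ π, |h_n(θ) − 2(1 − e^{iθ})^ε| < η and |2/h_n(θ) − (1 − e^{iθ})^{−ε}| < η. -/
open MeasureTheory

/-- The Fejér kernel of degree `n`. -/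
noncomputable def fejer (n : ℕ) (θ : ℝ) : ℝ :=
  (1 / (2 * Real.pi * n)) * (Real.sin (n * θ / 2) / Real.sin (θ / 2)) ^ 2

/-- `h_n(θ) := 2 ((1 - e^{i·})^ε ∗ 𝓕_n)(θ)`, where `(1 - e^{iθ})^ε` is the principal branch
(`Complex.cpow`, which vanishes at `θ ∈ 2πℤ` since `ε ≠ 0`). -/
noncomputable def hAux (ε : ℝ) (n : ℕ) (θ : ℝ) : ℂ :=
  2 * ∫ x in (-Real.pi)..Real.pi,
    (1 - Complex.exp (Complex.I * (θ - x))) ^ (ε : ℂ) * (fejer n x : ℂ)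



namespace HAuxP
open Real

/-- Dirichlet kernel (without normalization). -/
noncomputable def D (j : ℕ) (x : ℝ) : ℝ :=
  1 + 2 * ∑ k ∈ Finset.range j, Real.cos ((k + 1) * x)

/-- `n` times the (unnormalized) Fejér kernel, as a trig polynomial. -/
noncomputable def G (n : ℕ) (x : ℝ) : ℝ := ∑ j ∈ Finset.range n, D j x

lemma D_mul (j : ℕ) (x : ℝ) :
    (1 - Real.cos x) * D j x = Real.cos (j * x) - Real.cos ((j + 1) * x) := by
  induction j with
  | zero => simp [D]
  | succ j ih =>
    have e1 : ((j : ℝ) + 1 + 1) * x = ((j : ℝ) + 1) * x + x := by ring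
    have e2 : (j : ℝ) * x = ((j : ℝ) + 1) * x - x := by ring
    have hD : D (j + 1) x = D j x + 2 * Real.cos (((j : ℝ) + 1) * x) := by
      simp [D, Finset.sum_range_succ, mul_add]; ring
    rw [hD]
    push_cast
    rw [e1, Real.cos_add]
    rw [e2, Real.cos_sub] at ih
    nlinarith [ih]

lemma G_mul (n : ℕ) (x : ℝ) : G n x * (1 - Real.cos x) = 1 - Real.cos (n * x) := by
  have : G n x * (1 - Real.cos x)
      = ∑ j ∈ Finset.range n, (Real.cos (j * x) - Real.cos ((j + 1) * x)) := by
    rw [G, Finset.sum_mul]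
    refine Finset.sum_congr rfl fun j _ => ?_
    rw [mul_comm, D_mul]
  rw [this]
  have := Finset.sum_range_sub' (fun j : ℕ => Real.cos (j * x)) n
  simp only [Nat.cast_zero, zero_mul, Real.cos_zero] at this
  rw [← this]
  refine Finset.sum_congr rfl fun j _ => ?_
  push_cast; ring

lemma G_eq (n : ℕ) {x : ℝ} (hx : Real.sin (x / 2) ≠ 0) :
    G n x = (Real.sin (n * x / 2) / Real.sin (x / 2)) ^ 2 := by
  have h1 : Real.sin (x / 2) ^ 2 = 1 / 2 - Real.cos x / 2 := by
    have := Real.sin_sq_eq_half_sub (x / 2)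
    have e : 2 * (x / 2) = x := by ring
    rwa [e] at this
  have h2 : Real.sin ((n : ℝ) * x / 2) ^ 2 = 1 / 2 - Real.cos ((n : ℝ) * x) / 2 := by
    have := Real.sin_sq_eq_half_sub ((n : ℝ) * x / 2)
    have e : 2 * ((n : ℝ) * x / 2) = (n : ℝ) * x := by ring
    rwa [e] at this
  have hG := G_mul n x
  rw [div_pow]
  rw [eq_div_iff (by positivity)]
  rw [h1, h2]
  linarith [hG]

lemma cos_eq_one_of (j : ℕ) {x : ℝ} (hx : Real.cos x = 1) : Real.cos ((j + 1 : ℝ) * x) = 1 := by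
  obtain ⟨k, hk⟩ := (Real.cos_eq_one_iff x).1 hx
  subst hk
  have : ((j : ℝ) + 1) * ((k : ℝ) * (2 * π)) = (((j + 1 : ℕ) * k : ℤ) : ℝ) * (2 * π) := by
    push_cast; ring
  rw [this, Real.cos_int_mul_two_pi]

lemma G_nonneg (n : ℕ) (x : ℝ) : 0 ≤ G n x := by
  by_cases hx : Real.cos x = 1
  · refine Finset.sum_nonneg fun j _ => ?_
    have : D j x = 1 + 2 * j := by
      rw [D]
      rw [Finset.sum_congr rfl fun k _ => by
        have := cos_eq_one_of k hx; push_cast at this ⊢; rw [this]]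
      simp
    rw [this]; positivity
  · have h1 : 0 < 1 - Real.cos x := by
      have := Real.cos_le_one x
      cases lt_or_eq_of_le this with
      | inl h => linarith
      | inr h => exact absurd h hx
    have h2 : 0 ≤ 1 - Real.cos (n * x) := by linarith [Real.cos_le_one ((n : ℝ) * x)]
    have := G_mul n x
    nlinarith

lemma G_cont (n : ℕ) : Continuous (G n) := by
  unfold G D
  fun_prop

lemma intD (j : ℕ) : ∫ x in (-π)..π, D j x = 2 * π := by
  unfold D
  have hint : ∀ k ∈ Finset.range j, IntervalIntegrable
      (fun x => Real.cos ((k + 1 : ℝ) * x)) volume (-π) π := by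
    intro k _
    exact (by fun_prop : Continuous fun x : ℝ => Real.cos ((k + 1 : ℝ) * x)).intervalIntegrable _ _
  have h1 : ∫ x in (-π)..π, (∑ k ∈ Finset.range j, Real.cos ((k + 1 : ℝ) * x)) = 0 := by
    rw [intervalIntegral.integral_finset_sum hint]
    refine Finset.sum_eq_zero fun k _ => ?_
    have hc : ((k : ℝ) + 1) ≠ 0 := by positivity
    rw [intervalIntegral.integral_comp_mul_left (fun y => Real.cos y) hc,
      integral_cos]
    have e1 : ((k : ℝ) + 1) * π = ((k + 1 : ℕ) : ℝ) * π := by push_cast; ring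
    rw [mul_neg, Real.sin_neg, e1, Real.sin_nat_mul_pi]
    simp
  have hc2 : Continuous fun x : ℝ => 2 * ∑ k ∈ Finset.range j, Real.cos ((k + 1 : ℝ) * x) := by
    fun_prop
  rw [intervalIntegral.integral_add (intervalIntegrable_const) (hc2.intervalIntegrable _ _),
    intervalIntegral.integral_const_mul, h1]
  simp [two_mul]

lemma intG (n : ℕ) : ∫ x in (-π)..π, G n x = 2 * π * n := by
  unfold G
  rw [intervalIntegral.integral_finset_sum (fun j _ => (by
    unfold D; fun_prop : Continuous (D j)).intervalIntegrable _ _)]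
  rw [Finset.sum_congr rfl fun j _ => intD j]
  simp [mul_comm]

end HAuxP

namespace HAuxP

noncomputable def f (ε θ : ℝ) : ℂ := (1 - Complex.exp (Complex.I * θ)) ^ (ε : ℂ)

lemma base_re (θ : ℝ) : (1 - Complex.exp (Complex.I * θ)).re = 1 - Real.cos θ := by
  rw [mul_comm]
  simp [Complex.exp_ofReal_mul_I_re]

lemma base_im (θ : ℝ) : (1 - Complex.exp (Complex.I * θ)).im = -Real.sin θ := by
  rw [mul_comm]
  simp [Complex.exp_ofReal_mul_I_im]

lemma base_abs_sq (θ : ℝ) : ‖1 - Complex.exp (Complex.I * θ)‖ ^ 2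
    = 2 - 2 * Real.cos θ := by
  rw [← Complex.normSq_eq_norm_sq, Complex.normSq_apply, base_re, base_im]
  nlinarith [Real.sin_sq_add_cos_sq θ]

lemma f_cont {ε : ℝ} (hε : 0 < ε) : Continuous (f ε) := by
  rw [continuous_iff_continuousAt]
  intro θ
  have hb : Continuous fun θ : ℝ => 1 - Complex.exp (Complex.I * θ) := by fun_prop
  have h1 : ContinuousAt (fun z : ℂ => z ^ (ε : ℂ)) (1 - Complex.exp (Complex.I * θ)) := by
    refine Complex.continuousAt_cpow_const_of_re_pos (Or.inl ?_) (by simpa using hε)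
    rw [base_re]
    linarith [Real.cos_le_one θ]
  exact Filter.Tendsto.comp h1 hb.continuousAt

lemma f_norm_eq {ε θ : ℝ} (hθ : (1 - Complex.exp (Complex.I * θ)) ≠ 0) :
    ‖f ε θ‖ = ‖1 - Complex.exp (Complex.I * θ)‖ ^ ε := by
  rw [f, Complex.norm_cpow_of_ne_zero hθ]
  simp

lemma f_norm_le {ε : ℝ} (hε0 : 0 < ε) (hε1 : ε ≤ 1) (θ : ℝ) : ‖f ε θ‖ ≤ 2 := by
  by_cases hθ : (1 - Complex.exp (Complex.I * θ)) = 0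
  · rw [f, hθ, Complex.zero_cpow (by exact_mod_cast hε0.ne')]
    norm_num
  · rw [f_norm_eq hθ]
    have h1 : ‖1 - Complex.exp (Complex.I * θ)‖ ≤ 2 := by
      calc ‖1 - Complex.exp (Complex.I * θ)‖
          ≤ ‖(1 : ℂ)‖ + ‖Complex.exp (Complex.I * θ)‖ := by
            exact (norm_sub_le _ _)
        _ ≤ 2 := by
            have : ‖Complex.exp (Complex.I * θ)‖ = 1 := by
              rw [Complex.norm_exp]; simp
            simp [this]; norm_num
    calc ‖1 - Complex.exp (Complex.I * θ)‖ ^ ε ≤ (2 : ℝ) ^ ε :=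
        Real.rpow_le_rpow (norm_nonneg _) h1 hε0.le
      _ ≤ (2 : ℝ) ^ (1 : ℝ) := Real.rpow_le_rpow_of_exponent_le (by norm_num) hε1
      _ = 2 := Real.rpow_one 2

lemma base_abs_ge {δ θ : ℝ} (hδ0 : 0 < δ) (hδπ : δ < Real.pi) (h1 : δ ≤ |θ|)
    (h2 : |θ| ≤ Real.pi) :
    Real.sqrt (2 - 2 * Real.cos δ) ≤ ‖1 - Complex.exp (Complex.I * θ)‖ := by
  have hcos : Real.cos θ ≤ Real.cos δ := by
    rw [← Real.cos_abs]
    exact Real.cos_le_cos_of_nonneg_of_le_pi hδ0.le h2 h1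
  have h3 : 2 - 2 * Real.cos δ ≤ ‖1 - Complex.exp (Complex.I * θ)‖ ^ 2 := by
    rw [base_abs_sq]; linarith
  calc Real.sqrt (2 - 2 * Real.cos δ)
      ≤ Real.sqrt (‖1 - Complex.exp (Complex.I * θ)‖ ^ 2) := Real.sqrt_le_sqrt h3
    _ = ‖1 - Complex.exp (Complex.I * θ)‖ :=
        Real.sqrt_sq (norm_nonneg _)

lemma sqrt_pos_of {δ : ℝ} (hδ0 : 0 < δ) (hδπ : δ < Real.pi) :
    0 < Real.sqrt (2 - 2 * Real.cos δ) := by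
  refine Real.sqrt_pos.2 ?_
  have : Real.cos δ < Real.cos 0 := Real.cos_lt_cos_of_nonneg_of_le_pi le_rfl hδπ.le hδ0
  rw [Real.cos_zero] at this
  linarith

lemma f_norm_ge {ε δ θ : ℝ} (hε0 : 0 < ε) (hδ0 : 0 < δ) (hδπ : δ < Real.pi)
    (h1 : δ ≤ |θ|) (h2 : |θ| ≤ Real.pi) :
    Real.sqrt (2 - 2 * Real.cos δ) ^ ε ≤ ‖f ε θ‖ := by
  have hge := base_abs_ge hδ0 hδπ h1 h2
  have hne : (1 - Complex.exp (Complex.I * θ)) ≠ 0 := by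
    intro h
    rw [h] at hge
    simp at hge
    have := sqrt_pos_of hδ0 hδπ
    linarith
  rw [f_norm_eq hne]
  exact Real.rpow_le_rpow (Real.sqrt_nonneg _) hge hε0.le

end HAuxP

namespace HAuxP

lemma sin_half_pos {x : ℝ} (hx0 : 0 < x) (hx : x ≤ Real.pi) : 0 < Real.sin (x / 2) := by
  refine Real.sin_pos_of_pos_of_lt_pi (by positivity) ?_
  have := Real.pi_pos
  linarith

lemma sin_half_ne {x : ℝ} (hx0 : x ≠ 0) (hx : |x| ≤ Real.pi) : Real.sin (x / 2) ≠ 0 := by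
  have habs : 0 < Real.sin (|x| / 2) := sin_half_pos (abs_pos.2 hx0) hx
  rcases abs_choice x with h | h
  · rw [h] at habs; exact habs.ne'
  · rw [h] at habs
    rw [neg_div, Real.sin_neg] at habs
    intro hc; rw [hc] at habs; simp at habs

lemma sin_sq_abs_half (x : ℝ) : Real.sin (x / 2) ^ 2 = Real.sin (|x| / 2) ^ 2 := by
  rcases abs_choice x with h | h
  · rw [h]
  · rw [h, neg_div, Real.sin_neg]; ring

lemma G_le (n : ℕ) {ρ x : ℝ} (hρ0 : 0 < ρ) (h1 : ρ ≤ |x|) (h2 : |x| ≤ Real.pi) :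
    G n x ≤ 1 / Real.sin (ρ / 2) ^ 2 := by
  have hx0 : x ≠ 0 := by
    intro h; rw [h] at h1; simp at h1; linarith
  have hsin := sin_half_ne hx0 h2
  have hsρ : 0 < Real.sin (ρ / 2) := sin_half_pos hρ0 (le_trans h1 h2)
  have hmono : Real.sin (ρ / 2) ≤ Real.sin (|x| / 2) := by
    have hpi := Real.pi_pos
    refine Real.strictMonoOn_sin.monotoneOn ⟨by linarith, by linarith⟩
      ⟨by linarith [abs_nonneg x], by linarith⟩ (by linarith)
  have hden : Real.sin (ρ / 2) ^ 2 ≤ Real.sin (x / 2) ^ 2 := by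
    rw [sin_sq_abs_half x]
    exact pow_le_pow_left₀ hsρ.le hmono 2
  rw [G_eq n hsin, div_pow]
  refine div_le_div₀ (by norm_num) ?_ (by positivity) hden
  exact Real.sin_sq_le_one _

lemma fejer_eq {n : ℕ} {x : ℝ} (hx : Real.sin (x / 2) ≠ 0) :
    (fejer n x : ℝ) = G n x / (2 * Real.pi * n) := by
  rw [_root_.fejer, G_eq n hx]
  ring

lemma hAux_eq {ε : ℝ} (n : ℕ) (θ : ℝ) :
    hAux ε n θ = 2 * ∫ x in (-Real.pi)..Real.pi,
      f ε (θ - x) * ((G n x / (2 * Real.pi * n) : ℝ) : ℂ) := by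
  rw [hAux]
  congr 1
  refine intervalIntegral.integral_congr_ae ?_
  have h0 : ∀ᵐ x : ℝ, x ≠ 0 := by
    have hs : {a : ℝ | ¬ a ≠ 0} = {0} := by ext a; simp
    rw [MeasureTheory.ae_iff, hs]
    exact Real.volume_singleton
  filter_upwards [h0] with x hx0 hx
  rw [Set.uIoc_of_le (by linarith [Real.pi_pos] : -Real.pi ≤ Real.pi)] at hx
  have habs : |x| ≤ Real.pi := abs_le.2 ⟨hx.1.le, hx.2⟩
  rw [fejer_eq (sin_half_ne hx0 habs), f]
  push_cast
  ring_nf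

lemma key {ε : ℝ} (hε0 : 0 < ε) (hε1 : ε ≤ 1) {n : ℕ} (hn : 1 ≤ n) {θ ρ η' : ℝ}
    (hρ0 : 0 < ρ) (hρπ : ρ < Real.pi) (hη' : 0 ≤ η')
    (hub : ∀ x : ℝ, |x| ≤ ρ → ‖f ε (θ - x) - f ε θ‖ ≤ η') :
    ‖hAux ε n θ - 2 * f ε θ‖ ≤ 2 * η' + 8 / (n * Real.sin (ρ / 2) ^ 2) := by
  have hπ := Real.pi_pos
  have hn0 : (0 : ℝ) < n := by exact_mod_cast hn
  have hsρ : 0 < Real.sin (ρ / 2) := sin_half_pos hρ0 hρπ.le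
  set c : ℝ → ℂ := fun x => ((G n x / (2 * Real.pi * n) : ℝ) : ℂ) with hc
  set g : ℝ → ℂ := fun x => (f ε (θ - x) - f ε θ) * c x with hg
  have hccont : Continuous c := by
    refine Complex.continuous_ofReal.comp ?_
    exact (G_cont n).div_const _
  have hfcont : Continuous fun x : ℝ => f ε (θ - x) :=
    (f_cont hε0).comp (continuous_const.sub continuous_id)
  have hgcont : Continuous g := (hfcont.sub continuous_const).mul hccont
  -- value of ∫ c
  have hintc : ∫ x in (-Real.pi)..Real.pi, c x = 1 := by
    rw [hc, intervalIntegral.integral_ofReal]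
    norm_cast
    rw [intervalIntegral.integral_div, intG]
    field_simp
  -- step A
  have hA : hAux ε n θ - 2 * f ε θ = 2 * ∫ x in (-Real.pi)..Real.pi, g x := by
    rw [hAux_eq n θ]
    have : ∫ x in (-Real.pi)..Real.pi, g x
        = (∫ x in (-Real.pi)..Real.pi, f ε (θ - x) * c x)
          - ∫ x in (-Real.pi)..Real.pi, f ε θ * c x := by
      rw [← intervalIntegral.integral_sub (f := fun x => f ε (θ - x) * c x) (g := fun x => f ε θ * c x) ((hfcont.mul hccont).intervalIntegrable _ _)
        ((continuous_const.mul hccont).intervalIntegrable _ _)]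
      congr 1; ext x; rw [hg]; ring
    rw [this, intervalIntegral.integral_const_mul, hintc]
    ring
  rw [hA]
  -- split the integral
  have i1 : IntervalIntegrable g volume (-Real.pi) (-ρ) := hgcont.intervalIntegrable _ _
  have i2 : IntervalIntegrable g volume (-ρ) ρ := hgcont.intervalIntegrable _ _
  have i3 : IntervalIntegrable g volume ρ Real.pi := hgcont.intervalIntegrable _ _
  have hsplit : ∫ x in (-Real.pi)..Real.pi, g x
      = (∫ x in (-Real.pi)..(-ρ), g x) + (∫ x in (-ρ)..ρ, g x)
        + ∫ x in ρ..Real.pi, g x := by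
    rw [← intervalIntegral.integral_add_adjacent_intervals (i1.trans i2) i3,
      ← intervalIntegral.integral_add_adjacent_intervals i1 i2]
  -- tail bound constant
  set C : ℝ := 4 * (1 / Real.sin (ρ / 2) ^ 2 / (2 * Real.pi * n)) with hC
  have hCnn : 0 ≤ C := by positivity
  have htail : ∀ x : ℝ, ρ ≤ |x| → |x| ≤ Real.pi → ‖g x‖ ≤ C := by
    intro x h1 h2
    show ‖(f ε (θ - x) - f ε θ) * c x‖ ≤ C
    have hb1 : ‖f ε (θ - x) - f ε θ‖ ≤ 4 := by
      calc ‖f ε (θ - x) - f ε θ‖ ≤ ‖f ε (θ - x)‖ + ‖f ε θ‖ := norm_sub_le _ _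
        _ ≤ 4 := by linarith [f_norm_le hε0 hε1 (θ - x), f_norm_le hε0 hε1 θ]
    have hb2 : ‖c x‖ ≤ 1 / Real.sin (ρ / 2) ^ 2 / (2 * Real.pi * n) := by
      show ‖((G n x / (2 * Real.pi * n) : ℝ) : ℂ)‖ ≤ _
      rw [Complex.norm_real, Real.norm_eq_abs,
        abs_of_nonneg (div_nonneg (G_nonneg n x) (by positivity))]
      gcongr
      exact G_le n hρ0 h1 h2
    calc ‖(f ε (θ - x) - f ε θ) * c x‖ = ‖f ε (θ - x) - f ε θ‖ * ‖c x‖ := norm_mul _ _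
      _ ≤ 4 * (1 / Real.sin (ρ / 2) ^ 2 / (2 * Real.pi * n)) := by
          refine mul_le_mul hb1 hb2 (norm_nonneg _) (by norm_num)
      _ = C := rfl
  -- middle bound
  have hmid : ‖∫ x in (-ρ)..ρ, g x‖ ≤ η' := by
    have h1 : ‖∫ x in (-ρ)..ρ, g x‖ ≤ ∫ x in (-ρ)..ρ, ‖g x‖ :=
      intervalIntegral.norm_integral_le_integral_norm (by linarith)
    have h2 : ∫ x in (-ρ)..ρ, ‖g x‖
        ≤ ∫ x in (-ρ)..ρ, η' * (G n x / (2 * Real.pi * n)) := by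
      refine intervalIntegral.integral_mono_on (by linarith)
        (hgcont.norm.intervalIntegrable _ _)
        ((continuous_const.mul ((G_cont n).div_const _)).intervalIntegrable _ _) ?_
      intro x hx
      have hxρ : |x| ≤ ρ := abs_le.2 ⟨hx.1, hx.2⟩
      show ‖(f ε (θ - x) - f ε θ) * c x‖ ≤ _
      have hGnn : 0 ≤ G n x / (2 * Real.pi * n) := div_nonneg (G_nonneg n x) (by positivity)
      calc ‖(f ε (θ - x) - f ε θ) * c x‖ = ‖f ε (θ - x) - f ε θ‖ * ‖c x‖ := norm_mul _ _
        _ ≤ η' * (G n x / (2 * Real.pi * n)) := by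
            have : ‖c x‖ = G n x / (2 * Real.pi * n) := by
              show ‖((G n x / (2 * Real.pi * n) : ℝ) : ℂ)‖ = _
              rw [Complex.norm_real, Real.norm_eq_abs, abs_of_nonneg hGnn]
            rw [this]
            exact mul_le_mul (hub x hxρ) le_rfl hGnn hη'
    have h3 : ∫ x in (-ρ)..ρ, η' * (G n x / (2 * Real.pi * n)) ≤ η' := by
      rw [intervalIntegral.integral_const_mul]
      have h4 : ∫ x in (-ρ)..ρ, G n x / (2 * Real.pi * n)
          ≤ ∫ x in (-Real.pi)..Real.pi, G n x / (2 * Real.pi * n) := by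
        refine intervalIntegral.integral_mono_interval (by linarith) (by linarith) (by linarith)
          ?_ (((G_cont n).div_const _).intervalIntegrable _ _)
        filter_upwards with x
        exact div_nonneg (G_nonneg n x) (by positivity)
      have h5 : ∫ x in (-Real.pi)..Real.pi, G n x / (2 * Real.pi * n) = 1 := by
        rw [intervalIntegral.integral_div, intG]; field_simp
      rw [h5] at h4
      calc η' * ∫ x in (-ρ)..ρ, G n x / (2 * Real.pi * n) ≤ η' * 1 :=
          mul_le_mul_of_nonneg_left h4 hη'
        _ = η' := mul_one _
    linarith
  -- right tail
  have hright : ‖∫ x in ρ..Real.pi, g x‖ ≤ C * Real.pi := by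
    have := intervalIntegral.norm_integral_le_of_norm_le_const
      (C := C) (f := g) (a := ρ) (b := Real.pi) ?_
    · calc ‖∫ x in ρ..Real.pi, g x‖ ≤ C * |Real.pi - ρ| := this
        _ ≤ C * Real.pi := by
            refine mul_le_mul_of_nonneg_left ?_ hCnn
            rw [abs_of_nonneg (by linarith)]; linarith
    · intro x hx
      rw [Set.uIoc_of_le (by linarith)] at hx
      refine htail x ?_ ?_
      · rw [abs_of_pos (by linarith [hx.1])]; exact hx.1.le
      · rw [abs_of_pos (by linarith [hx.1])]; exact hx.2
  -- left tail
  have hleft : ‖∫ x in (-Real.pi)..(-ρ), g x‖ ≤ C * Real.pi := by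
    have := intervalIntegral.norm_integral_le_of_norm_le_const
      (C := C) (f := g) (a := -Real.pi) (b := -ρ) ?_
    · calc ‖∫ x in (-Real.pi)..(-ρ), g x‖ ≤ C * |(-ρ) - (-Real.pi)| := this
        _ ≤ C * Real.pi := by
            refine mul_le_mul_of_nonneg_left ?_ hCnn
            rw [abs_of_nonneg (by linarith)]; linarith
    · intro x hx
      rw [Set.uIoc_of_le (by linarith)] at hx
      have hxneg : x < 0 := by linarith [hx.2, hρ0]
      refine htail x ?_ ?_
      · rw [abs_of_neg hxneg]; linarith [hx.2]
      · rw [abs_of_neg hxneg]; linarith [hx.1]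
  have hCπ : C * Real.pi = 2 / (n * Real.sin (ρ / 2) ^ 2) := by
    rw [hC]; field_simp; ring
  rw [hsplit]
  calc ‖(2 : ℂ) * ((∫ x in (-Real.pi)..(-ρ), g x) + (∫ x in (-ρ)..ρ, g x)
        + ∫ x in ρ..Real.pi, g x)‖
      = 2 * ‖(∫ x in (-Real.pi)..(-ρ), g x) + (∫ x in (-ρ)..ρ, g x)
        + ∫ x in ρ..Real.pi, g x‖ := by
        rw [norm_mul]
        norm_num
    _ ≤ 2 * (C * Real.pi + η' + C * Real.pi) := by
        refine mul_le_mul_of_nonneg_left ?_ (by norm_num)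
        calc ‖(∫ x in (-Real.pi)..(-ρ), g x) + (∫ x in (-ρ)..ρ, g x)
              + ∫ x in ρ..Real.pi, g x‖
            ≤ ‖(∫ x in (-Real.pi)..(-ρ), g x) + (∫ x in (-ρ)..ρ, g x)‖
              + ‖∫ x in ρ..Real.pi, g x‖ := norm_add_le _ _
          _ ≤ ‖∫ x in (-Real.pi)..(-ρ), g x‖ + ‖∫ x in (-ρ)..ρ, g x‖
              + ‖∫ x in ρ..Real.pi, g x‖ := by
                linarith [norm_add_le (∫ x in (-Real.pi)..(-ρ), g x) (∫ x in (-ρ)..ρ, g x)]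
          _ ≤ C * Real.pi + η' + C * Real.pi := by linarith
    _ = 2 * η' + 8 / (n * Real.sin (ρ / 2) ^ 2) := by rw [hCπ]; ring

end HAuxP

/-- For fixed `ε ∈ (0,1)` and `δ ∈ (0,π)`, `h_n(θ) → 2(1-e^{iθ})^ε` and
`2/h_n(θ) → (1-e^{iθ})^{-ε}` uniformly on `{θ : δ ≤ |θ| ≤ π}`. -/
theorem hAux_uniform_convergence (ε : ℝ) (hε : ε ∈ Set.Ioo (0 : ℝ) 1)
    (δ : ℝ) (hδ : δ ∈ Set.Ioo (0 : ℝ) Real.pi) :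
    ∀ η : ℝ, 0 < η → ∃ N : ℕ, ∀ n : ℕ, N ≤ n → ∀ θ : ℝ, δ ≤ |θ| → |θ| ≤ Real.pi →
      ‖hAux ε n θ - 2 * (1 - Complex.exp (Complex.I * θ)) ^ (ε : ℂ)‖ < η ∧
      ‖2 / hAux ε n θ - (1 - Complex.exp (Complex.I * θ)) ^ (-(ε : ℂ))‖ < η := by
  obtain ⟨hε0, hε1⟩ := hε
  obtain ⟨hδ0, hδπ⟩ := hδ
  have hπ := Real.pi_pos
  intro η hη
  -- lower bound on ‖f ε θ‖ on the region
  set c : ℝ := Real.sqrt (2 - 2 * Real.cos δ) ^ ε with hcdef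
  have hc0 : 0 < c := Real.rpow_pos_of_pos (HAuxP.sqrt_pos_of hδ0 hδπ) ε
  -- tolerance
  set τ : ℝ := min η (min c (η * (c * c))) / 2 with hτdef
  have hτ0 : 0 < τ := by
    rw [hτdef]
    have : 0 < min η (min c (η * (c * c))) := by
      refine lt_min hη (lt_min hc0 (by positivity))
    linarith
  have hτη : τ < η := by
    rw [hτdef]
    have h1 : min η (min c (η * (c * c))) ≤ η := min_le_left _ _
    linarith
  have hτc : τ ≤ c / 2 := by
    rw [hτdef]
    have h1 : min η (min c (η * (c * c))) ≤ c := (min_le_right _ _).trans (min_le_left _ _)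
    linarith
  have hτcc : τ ≤ η * (c * c) / 2 := by
    rw [hτdef]
    have h1 : min η (min c (η * (c * c))) ≤ η * (c * c) :=
      (min_le_right _ _).trans (min_le_right _ _)
    linarith
  -- uniform continuity of f on a compact interval
  have huc : UniformContinuousOn (HAuxP.f ε) (Set.Icc (-(2 * Real.pi)) (2 * Real.pi)) :=
    isCompact_Icc.uniformContinuousOn_of_continuous ((HAuxP.f_cont hε0).continuousOn)
  obtain ⟨ρ, hρ0, hρ⟩ := (Metric.uniformContinuousOn_iff).1 huc (τ / 4) (by linarith)
  set ρ₂ : ℝ := min (ρ / 2) (Real.pi / 2) with hρ₂def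
  have hρ₂0 : 0 < ρ₂ := lt_min (by linarith) (by linarith)
  have hρ₂π : ρ₂ < Real.pi := (min_le_right _ _).trans_lt (by linarith)
  have hsρ : 0 < Real.sin (ρ₂ / 2) := HAuxP.sin_half_pos hρ₂0 hρ₂π.le
  -- choose N
  obtain ⟨M, hM⟩ := exists_nat_gt (16 / (τ * Real.sin (ρ₂ / 2) ^ 2))
  refine ⟨max M 1, fun n hn θ hθ1 hθ2 => ?_⟩
  have hn1 : 1 ≤ n := le_trans (le_max_right M 1) hn
  have hnM : (M : ℝ) ≤ n := by exact_mod_cast le_trans (le_max_left M 1) hn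
  have hn0 : (0 : ℝ) < n := by exact_mod_cast hn1
  -- the uniform-continuity bound at this θ
  have hub : ∀ x : ℝ, |x| ≤ ρ₂ → ‖HAuxP.f ε (θ - x) - HAuxP.f ε θ‖ ≤ τ / 4 := by
    intro x hx
    have hxρ : |x| < ρ := by
      have := min_le_left (ρ / 2) (Real.pi / 2)
      calc |x| ≤ ρ₂ := hx
        _ ≤ ρ / 2 := this
        _ < ρ := by linarith
    have hθK : θ ∈ Set.Icc (-(2 * Real.pi)) (2 * Real.pi) := by
      constructor <;> [linarith [neg_abs_le θ]; linarith [le_abs_self θ]]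
    have hθxK : θ - x ∈ Set.Icc (-(2 * Real.pi)) (2 * Real.pi) := by
      have h1 : |θ - x| ≤ 2 * Real.pi := by
        calc |θ - x| ≤ |θ| + |x| := abs_sub _ _
          _ ≤ Real.pi + ρ₂ := by linarith
          _ ≤ 2 * Real.pi := by linarith
      constructor <;> [linarith [neg_abs_le (θ - x)]; linarith [le_abs_self (θ - x)]]
    have hd : dist (θ - x) θ < ρ := by
      rw [Real.dist_eq]
      simpa using hxρ
    have := hρ (θ - x) hθxK θ hθK hd
    rw [dist_eq_norm] at this
    exact this.le
  -- the main estimate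
  have hkey := HAuxP.key hε0 hε1.le hn1 hρ₂0 hρ₂π (by linarith : (0:ℝ) ≤ τ / 4) hub
  have htailsmall : 8 / (n * Real.sin (ρ₂ / 2) ^ 2) < τ / 2 := by
    have h1 : 16 / (τ * Real.sin (ρ₂ / 2) ^ 2) < (n : ℝ) := lt_of_lt_of_le hM hnM
    rw [div_lt_iff₀ (by positivity)] at h1
    rw [div_lt_iff₀ (by positivity)]
    nlinarith [sq_nonneg (Real.sin (ρ₂ / 2))]
  have hmain : ‖hAux ε n θ - 2 * HAuxP.f ε θ‖ < τ := by
    calc ‖hAux ε n θ - 2 * HAuxP.f ε θ‖ ≤ 2 * (τ / 4) + 8 / (n * Real.sin (ρ₂ / 2) ^ 2) :=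
        hkey
      _ < τ / 2 + τ / 2 := by linarith
      _ = τ := by ring
  have hfeq : HAuxP.f ε θ = (1 - Complex.exp (Complex.I * θ)) ^ (ε : ℂ) := rfl
  -- lower bounds on norms
  have hwlb : c ≤ ‖HAuxP.f ε θ‖ := HAuxP.f_norm_ge hε0 hδ0 hδπ hθ1 hθ2
  have hwne : HAuxP.f ε θ ≠ 0 := by
    intro h; rw [h] at hwlb; simp at hwlb; linarith
  have h2w : ‖(2 : ℂ) * HAuxP.f ε θ‖ = 2 * ‖HAuxP.f ε θ‖ := by
    rw [norm_mul]; norm_num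
  have hhlb : c ≤ ‖hAux ε n θ‖ := by
    have h1 : ‖(2 : ℂ) * HAuxP.f ε θ‖ - ‖hAux ε n θ‖ ≤ ‖hAux ε n θ - 2 * HAuxP.f ε θ‖ := by
      rw [norm_sub_rev]
      exact norm_sub_norm_le _ _
    rw [h2w] at h1
    have : 2 * c ≤ 2 * ‖HAuxP.f ε θ‖ := by linarith
    linarith
  have hhne : hAux ε n θ ≠ 0 := by
    intro h; rw [h] at hhlb; simp at hhlb; linarith
  constructor
  · rw [← hfeq]
    exact hmain.trans hτη
  · rw [Complex.cpow_neg, ← hfeq]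
    have heq : 2 / hAux ε n θ - (HAuxP.f ε θ)⁻¹
        = (2 * HAuxP.f ε θ - hAux ε n θ) / (hAux ε n θ * HAuxP.f ε θ) := by
      field_simp
    rw [heq]
    have hnorm : ‖(2 * HAuxP.f ε θ - hAux ε n θ) / (hAux ε n θ * HAuxP.f ε θ)‖
        = ‖hAux ε n θ - 2 * HAuxP.f ε θ‖ / (‖hAux ε n θ‖ * ‖HAuxP.f ε θ‖) := by
      rw [norm_div, norm_mul, norm_sub_rev]
    rw [hnorm]
    have hden : c * c ≤ ‖hAux ε n θ‖ * ‖HAuxP.f ε θ‖ :=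
      mul_le_mul hhlb hwlb hc0.le (norm_nonneg _)
    calc ‖hAux ε n θ - 2 * HAuxP.f ε θ‖ / (‖hAux ε n θ‖ * ‖HAuxP.f ε θ‖)
        ≤ τ / (c * c) := by
          refine div_le_div₀ hτ0.le hmain.le (by positivity) hden
      _ ≤ (η * (c * c) / 2) / (c * c) := by gcongr
      _ = η / 2 := by field_simp
      _ < η := by linarith
end

section
/- There is an absolute constant C > 0 such that for every ε ∈ (0,1) and every θ ∈ [−π,π] with θ ≠ 0: | Re (1 − e^{iθ})^ε − |θ|^ε cos(επ/2) | ≤ C ε |θ|^{1+ε} and | Im (1 − e^{iθ})^ε | ≤ C ε |θ|^ε. -/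
open MeasureTheory

private lemma abs_cos_sub_cos' (a b : ℝ) : |Real.cos a - Real.cos b| ≤ |a - b| := by
  rw [Real.cos_sub_cos, abs_mul, abs_mul, show |(-2 : ℝ)| = 2 from by norm_num]
  have h1 : |Real.sin ((a + b) / 2)| ≤ 1 := Real.abs_sin_le_one _
  have h2 : |Real.sin ((a - b) / 2)| ≤ |a - b| / 2 := by
    have := Real.abs_sin_le_abs (x := (a - b) / 2)
    rwa [abs_div, abs_two] at this
  nlinarith [abs_nonneg (Real.sin ((a + b) / 2)), abs_nonneg (Real.sin ((a - b) / 2))]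

set_option maxHeartbeats 1000000 in
private lemma key {ε θ : ℝ} (hε0 : 0 < ε) (hε1 : ε < 1) (hθ0 : 0 < θ) (hθπ : θ ≤ Real.pi) :
    |((1 - Complex.exp (Complex.I * θ)) ^ (ε : ℂ)).re -
        θ ^ ε * Real.cos (ε * Real.pi / 2)| ≤ 2 * ε * θ ^ (1 + ε) ∧
      |((1 - Complex.exp (Complex.I * θ)) ^ (ε : ℂ)).im| ≤ 2 * ε * θ ^ ε := by
  have hπ := Real.pi_pos
  have hπ4 := Real.pi_le_four
  set r : ℝ := 2 * Real.sin (θ / 2) with hrdef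
  set φ : ℝ := (θ - Real.pi) / 2 with hφdef
  have hsin0 : 0 < Real.sin (θ / 2) :=
    Real.sin_pos_of_pos_of_lt_pi (by linarith) (by linarith)
  have hr0 : 0 < r := by rw [hrdef]; linarith
  -- the polar decomposition
  have hcosθ : Real.cos θ = 1 - 2 * Real.sin (θ / 2) ^ 2 := by
    have h1 : Real.cos (2 * (θ / 2)) = 2 * Real.cos (θ / 2) ^ 2 - 1 := Real.cos_two_mul _
    have h2 : Real.sin (θ / 2) ^ 2 + Real.cos (θ / 2) ^ 2 = 1 := Real.sin_sq_add_cos_sq _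
    have h3 : 2 * (θ / 2) = θ := by ring
    rw [h3] at h1; linarith
  have hsinθ : Real.sin θ = 2 * Real.sin (θ / 2) * Real.cos (θ / 2) := by
    have h1 : Real.sin (2 * (θ / 2)) = 2 * Real.sin (θ / 2) * Real.cos (θ / 2) :=
      Real.sin_two_mul _
    have h3 : 2 * (θ / 2) = θ := by ring
    rwa [h3] at h1
  have hcosφ : Real.cos φ = Real.sin (θ / 2) := by
    rw [show φ = -(Real.pi / 2 - θ / 2) by rw [hφdef]; ring, Real.cos_neg,
      Real.cos_pi_div_two_sub]
  have hsinφ : Real.sin φ = -Real.cos (θ / 2) := by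
    rw [show φ = -(Real.pi / 2 - θ / 2) by rw [hφdef]; ring, Real.sin_neg,
      Real.sin_pi_div_two_sub]
  have hz : (1 : ℂ) - Complex.exp (Complex.I * θ) = (r : ℂ) * Complex.exp (φ * Complex.I) := by
    have hc : Complex.I * (θ : ℂ) = (θ : ℂ) * Complex.I := mul_comm _ _
    rw [hc]
    apply Complex.ext
    · simp only [Complex.sub_re, Complex.one_re, Complex.exp_ofReal_mul_I_re,
        Complex.mul_re, Complex.ofReal_re, Complex.ofReal_im, Complex.exp_ofReal_mul_I_im,
        zero_mul, sub_zero]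
      rw [hcosθ, hcosφ, hrdef]; ring
    · simp only [Complex.sub_im, Complex.one_im, Complex.exp_ofReal_mul_I_im,
        Complex.mul_im, Complex.ofReal_re, Complex.ofReal_im, Complex.exp_ofReal_mul_I_re,
        zero_mul, add_zero, zero_sub]
      rw [hsinθ, hsinφ, hrdef]; ring
  have habs : ‖(1 - Complex.exp (Complex.I * θ))‖ = r := by
    rw [hz, norm_mul, Complex.norm_real, Complex.norm_exp_ofReal_mul_I, mul_one,
      Real.norm_eq_abs, abs_of_pos hr0]
  have hne : (1 : ℂ) - Complex.exp (Complex.I * θ) ≠ 0 := by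
    intro h
    rw [h, norm_zero] at habs
    linarith
  have hφmem : φ ∈ Set.Ioc (-Real.pi) Real.pi := by
    constructor
    · rw [hφdef]; linarith
    · rw [hφdef]; linarith
  have harg : (1 - Complex.exp (Complex.I * θ)).arg = φ := by
    rw [hz, Complex.arg_real_mul _ hr0, Complex.exp_mul_I]
    exact Complex.arg_cos_add_sin_mul_I hφmem
  have hlog : Complex.log (1 - Complex.exp (Complex.I * θ))
      = (Real.log r : ℂ) + (φ : ℂ) * Complex.I := by
    apply Complex.ext
    · simp [Complex.log_re, habs]
    · simp [Complex.log_im, harg]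
  have hre : ((1 - Complex.exp (Complex.I * θ)) ^ (ε : ℂ)).re
      = r ^ ε * Real.cos (Real.log r * ε * 0 + φ * ε) := by
    rw [Complex.cpow_def_of_ne_zero hne, Complex.exp_re, hlog]
    simp only [Complex.add_re, Complex.add_im, Complex.mul_re, Complex.mul_im,
      Complex.ofReal_re, Complex.ofReal_im, Complex.I_re, Complex.I_im]
    rw [Real.rpow_def_of_pos hr0]
    ring_nf
  have him : ((1 - Complex.exp (Complex.I * θ)) ^ (ε : ℂ)).im
      = r ^ ε * Real.sin (Real.log r * ε * 0 + φ * ε) := by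
    rw [Complex.cpow_def_of_ne_zero hne, Complex.exp_im, hlog]
    simp only [Complex.add_re, Complex.add_im, Complex.mul_re, Complex.mul_im,
      Complex.ofReal_re, Complex.ofReal_im, Complex.I_re, Complex.I_im]
    rw [Real.rpow_def_of_pos hr0]
    ring_nf
  rw [show Real.log r * ε * 0 + φ * ε = φ * ε by ring] at hre him
  -- basic bounds
  have hrθ : r ≤ θ := by
    have := Real.sin_lt (show 0 < θ / 2 by linarith)
    rw [hrdef]; linarith
  have hrlow : 2 / Real.pi * θ ≤ r := by
    have := Real.mul_le_sin (x := θ / 2) (by linarith) (by linarith)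
    rw [hrdef]; nlinarith
  have hgap : θ - r ≤ θ ^ 2 / 2 := by
    rcases le_or_gt (θ / 2) 1 with h | h
    · have := Real.sin_gt_sub_cube (show 0 < θ / 2 by linarith)
      rw [hrdef]; nlinarith
    · rw [hrdef]; nlinarith
  have hrε : r ^ ε ≤ θ ^ ε := Real.rpow_le_rpow hr0.le hrθ hε0.le
  have hθε : (0 : ℝ) < θ ^ ε := Real.rpow_pos_of_pos hθ0 ε
  have hrεpos : (0 : ℝ) < r ^ ε := Real.rpow_pos_of_pos hr0 ε
  -- bound on θ^ε - r^ε
  have hlogb : Real.log (θ / r) ≤ Real.pi / 4 * θ := by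
    calc Real.log (θ / r) ≤ θ / r - 1 := Real.log_le_sub_one_of_pos (by positivity)
      _ = (θ - r) / r := by field_simp
      _ ≤ (θ ^ 2 / 2) / (2 / Real.pi * θ) := by
          apply div_le_div₀ (by positivity) hgap (by positivity) hrlow
      _ = Real.pi / 4 * θ := by field_simp; ring
  have hlogneg : Real.log (r / θ) = -Real.log (θ / r) := by
    rw [Real.log_div hr0.ne' hθ0.ne', Real.log_div hθ0.ne' hr0.ne']; ring
  have hexp : 1 + ε * Real.log (r / θ) ≤ (r / θ) ^ ε := by
    rw [Real.rpow_def_of_pos (by positivity)]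
    have := Real.add_one_le_exp (Real.log (r / θ) * ε)
    linarith
  have hsplit : r ^ ε = θ ^ ε * (r / θ) ^ ε := by
    rw [← Real.mul_rpow hθ0.le (by positivity)]
    congr 1
    field_simp
  have hdiff : θ ^ ε - r ^ ε ≤ ε * θ ^ ε * (Real.pi / 4 * θ) := by
    have h1 : 1 - (r / θ) ^ ε ≤ ε * Real.log (θ / r) := by
      have : 1 - (r / θ) ^ ε ≤ -(ε * Real.log (r / θ)) := by linarith
      rw [hlogneg] at this; linarith
    calc θ ^ ε - r ^ ε = θ ^ ε * (1 - (r / θ) ^ ε) := by rw [hsplit]; ring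
      _ ≤ θ ^ ε * (ε * Real.log (θ / r)) := by
          exact mul_le_mul_of_nonneg_left h1 hθε.le
      _ ≤ θ ^ ε * (ε * (Real.pi / 4 * θ)) := by
          apply mul_le_mul_of_nonneg_left _ hθε.le
          exact mul_le_mul_of_nonneg_left hlogb hε0.le
      _ = ε * θ ^ ε * (Real.pi / 4 * θ) := by ring
  have hpow : θ ^ (1 + ε) = θ * θ ^ ε := by
    rw [Real.rpow_add hθ0, Real.rpow_one]
  -- real part estimate
  have hcosdiff : |Real.cos (φ * ε) - Real.cos (ε * Real.pi / 2)| ≤ ε * θ / 2 := by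
    have h := abs_cos_sub_cos' (φ * ε) (-(ε * Real.pi / 2))
    rw [Real.cos_neg] at h
    refine h.trans (le_of_eq ?_)
    rw [show φ * ε - -(ε * Real.pi / 2) = ε * θ / 2 by rw [hφdef]; ring]
    exact abs_of_nonneg (by positivity)
  constructor
  · rw [hre]
    have h1 : r ^ ε * Real.cos (φ * ε) - θ ^ ε * Real.cos (ε * Real.pi / 2)
        = (r ^ ε - θ ^ ε) * Real.cos (φ * ε)
          + θ ^ ε * (Real.cos (φ * ε) - Real.cos (ε * Real.pi / 2)) := by ring
    rw [h1]
    calc |(r ^ ε - θ ^ ε) * Real.cos (φ * ε)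
          + θ ^ ε * (Real.cos (φ * ε) - Real.cos (ε * Real.pi / 2))|
        ≤ |(r ^ ε - θ ^ ε) * Real.cos (φ * ε)|
          + |θ ^ ε * (Real.cos (φ * ε) - Real.cos (ε * Real.pi / 2))| := abs_add_le _ _
      _ = (θ ^ ε - r ^ ε) * |Real.cos (φ * ε)|
          + θ ^ ε * |Real.cos (φ * ε) - Real.cos (ε * Real.pi / 2)| := by
          rw [abs_mul, abs_mul, abs_of_pos hθε, abs_sub_comm,
            abs_of_nonneg (by linarith : (0:ℝ) ≤ θ ^ ε - r ^ ε)]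
      _ ≤ ε * θ ^ ε * (Real.pi / 4 * θ) + θ ^ ε * (ε * θ / 2) := by
          have hA : (θ ^ ε - r ^ ε) * |Real.cos (φ * ε)| ≤ ε * θ ^ ε * (Real.pi / 4 * θ) := by
            calc (θ ^ ε - r ^ ε) * |Real.cos (φ * ε)| ≤ (θ ^ ε - r ^ ε) * 1 :=
                  mul_le_mul_of_nonneg_left (Real.abs_cos_le_one _) (by linarith)
              _ = θ ^ ε - r ^ ε := mul_one _
              _ ≤ ε * θ ^ ε * (Real.pi / 4 * θ) := hdiff
          have hB : θ ^ ε * |Real.cos (φ * ε) - Real.cos (ε * Real.pi / 2)|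
              ≤ θ ^ ε * (ε * θ / 2) := mul_le_mul_of_nonneg_left hcosdiff hθε.le
          linarith
      _ ≤ 2 * ε * θ ^ (1 + ε) := by
          rw [hpow]
          nlinarith [mul_pos (mul_pos hε0 hθ0) hθε, hπ4]
  · rw [him]
    calc |r ^ ε * Real.sin (φ * ε)| = r ^ ε * |Real.sin (φ * ε)| := by
          rw [abs_mul, abs_of_pos hrεpos]
      _ ≤ θ ^ ε * |φ * ε| :=
          mul_le_mul hrε Real.abs_sin_le_abs (abs_nonneg _) hθε.le
      _ = θ ^ ε * (-φ * ε) := by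
          rw [abs_mul, abs_of_pos hε0, abs_of_nonpos (show φ ≤ 0 by rw [hφdef]; linarith)]
      _ ≤ θ ^ ε * (2 * ε) := by
          have h2 : -φ ≤ 2 := by rw [hφdef]; linarith
          exact mul_le_mul_of_nonneg_left (mul_le_mul_of_nonneg_right h2 hε0.le) hθε.le
      _ = 2 * ε * θ ^ ε := by ring

/-- There is an absolute constant `C > 0` such that for all `ε ∈ (0,1)` and
`θ ∈ [-π,π] \ {0}`, `|Re (1-e^{iθ})^ε - |θ|^ε cos(επ/2)| ≤ C ε |θ|^{1+ε}` and
`|Im (1-e^{iθ})^ε| ≤ C ε |θ|^ε`, where `(1-e^{iθ})^ε` is the principal branch. -/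
theorem one_sub_exp_cpow_expansion :
    ∃ C : ℝ, 0 < C ∧
      ∀ ε : ℝ, ε ∈ Set.Ioo (0 : ℝ) 1 →
        ∀ θ : ℝ, θ ∈ Set.Icc (-Real.pi) Real.pi → θ ≠ 0 →
          |((1 - Complex.exp (Complex.I * θ)) ^ (ε : ℂ)).re -
              |θ| ^ ε * Real.cos (ε * Real.pi / 2)| ≤ C * ε * |θ| ^ (1 + ε) ∧
          |((1 - Complex.exp (Complex.I * θ)) ^ (ε : ℂ)).im| ≤ C * ε * |θ| ^ ε := by
  refine ⟨2, by norm_num, ?_⟩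
  intro ε hε θ hθ hθne
  rcases hθne.lt_or_gt with hneg | hpos
  · -- θ < 0 : use conjugation with θ' = -θ
    have hθ' : (0 : ℝ) < -θ := by linarith
    have h := key hε.1 hε.2 hθ' (by linarith [hθ.1])
    have hconj : (1 : ℂ) - Complex.exp (Complex.I * θ)
        = (starRingEnd ℂ) (1 - Complex.exp (Complex.I * ((-θ : ℝ) : ℂ))) := by
      rw [map_sub, map_one, ← Complex.exp_conj]
      congr 1
      rw [map_mul, Complex.conj_I, Complex.conj_ofReal]
      push_cast
      ring
    have hargne : ((1 : ℂ) - Complex.exp (Complex.I * ((-θ : ℝ) : ℂ))).arg ≠ Real.pi := by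
      intro hcontra
      have hre0 : ((1 : ℂ) - Complex.exp (Complex.I * ((-θ : ℝ) : ℂ))).re
          = 1 - Real.cos (-θ) := by
        rw [show Complex.I * ((-θ : ℝ) : ℂ) = ((-θ : ℝ) : ℂ) * Complex.I from mul_comm _ _,
          Complex.sub_re, Complex.one_re, Complex.exp_ofReal_mul_I_re]
      have := (Complex.arg_eq_pi_iff.mp hcontra).1
      rw [hre0] at this
      have := Real.cos_le_one (-θ)
      linarith
    have hcpow : ((1 : ℂ) - Complex.exp (Complex.I * θ)) ^ (ε : ℂ)
        = (starRingEnd ℂ) (((1 : ℂ) - Complex.exp (Complex.I * ((-θ : ℝ) : ℂ))) ^ (ε : ℂ)) := by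
      rw [hconj, Complex.conj_cpow _ _ hargne, Complex.conj_ofReal]
    rw [hcpow, Complex.conj_re, Complex.conj_im, abs_neg, abs_of_neg hneg]
    exact h
  · rw [abs_of_pos hpos]
    exact key hε.1 hε.2 hpos hθ.2
end
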